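/- Let s = (s_1,…,s_n) be a sequence of positive integers and s* = (s_1,…,s_n,1). For every nonnegative integer t, the number of lattice points λ ∈ ℤ^n satisfying 0 ≤ λ_1/s_1 ≤ λ_2/s_2 ≤ ⋯ ≤ λ_n/s_n ≤ t equals Σ_{i=0}^{n} ℓ^i(Par_{s*}) · C(t+n−i, n), where C(·,·) is the binomial coefficient. (Equivalently, the δ-vector of the s-lecture hall polytope P_s satisfies δ_{P_s,i} = ℓ^i(Par_{s*}).) -/

import Mathlib

/-- The generator vectors of the s-lecture hall parallelepiped: `lhVec s j` has
`i`-th coordinate `s i` for `i ≥ j` and `0` for `i < j`. -/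
def lhVec {n : ℕ} (s : Fin n → ℕ) (j : Fin n) : Fin n → ℝ :=
  fun i => if j ≤ i then (s i : ℝ) else 0

/-- The s-lecture hall parallelepiped: the half-open parallelepiped generated by
the vectors `lhVec s j`. -/
def lhPar {n : ℕ} (s : Fin n → ℕ) : Set (Fin n → ℝ) :=
  {x | ∃ c : Fin n → ℝ, (∀ j, 0 ≤ c j ∧ c j < 1) ∧ x = ∑ j, c j • lhVec s j}

/-- `lhEll S i` is the number of lattice points of `S ⊆ ℝ^N` whose last coordinate
equals `i`. -/
noncomputable def lhEll {N : ℕ} (S : Set (Fin N → ℝ)) (i : ℕ) : ℕ :=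
  Set.ncard {x : Fin N → ℤ | (fun k => (x k : ℝ)) ∈ S ∧
    ∀ j : Fin N, (j : ℕ) = N - 1 → x j = (i : ℤ)}

/-- The number of s-descents of `r`: indices `i` with `r i / s i > r (i+1) / s (i+1)`. -/
noncomputable def sDes {N : ℕ} (s : Fin N → ℕ) (r : Fin N → ℤ) : ℕ :=
  Set.ncard {i : Fin N | ∃ h : (i : ℕ) + 1 < N,
    (r i : ℚ) / (s i : ℚ) > (r ⟨(i : ℕ) + 1, h⟩ : ℚ) / (s ⟨(i : ℕ) + 1, h⟩ : ℚ)}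

/-- The number of s-ascents of `r`: indices `i` with `r i / s i < r (i+1) / s (i+1)`. -/
noncomputable def sAsc {N : ℕ} (s : Fin N → ℕ) (r : Fin N → ℤ) : ℕ :=
  Set.ncard {i : Fin N | ∃ h : (i : ℕ) + 1 < N,
    (r i : ℚ) / (s i : ℚ) < (r ⟨(i : ℕ) + 1, h⟩ : ℚ) / (s ⟨(i : ℕ) + 1, h⟩ : ℚ)}

/-- The number of (regular) descents of `r`: indices `i` with `r i > r (i+1)`. -/
noncomputable def rDes {N : ℕ} (r : Fin N → ℤ) : ℕ :=
  Set.ncard {i : Fin N | ∃ h : (i : ℕ) + 1 < N, r ⟨(i : ℕ) + 1, h⟩ < r i}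

/-- The number of (regular) ascents of `r`: indices `i` with `r i < r (i+1)`. -/
noncomputable def rAsc {N : ℕ} (r : Fin N → ℤ) : ℕ :=
  Set.ncard {i : Fin N | ∃ h : (i : ℕ) + 1 < N, r i < r ⟨(i : ℕ) + 1, h⟩}

/-- The number of s-descents of `r` at positions strictly before position `i`. -/
noncomputable def sDesLt {N : ℕ} (s : Fin N → ℕ) (r : Fin N → ℤ) (i : Fin N) : ℕ :=
  Set.ncard {j : Fin N | (j : ℕ) < (i : ℕ) ∧ ∃ h : (j : ℕ) + 1 < N,
    (r j : ℚ) / (s j : ℚ) > (r ⟨(j : ℕ) + 1, h⟩ : ℚ) / (s ⟨(j : ℕ) + 1, h⟩ : ℚ)}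

/-- `lhPsi s` is the set `Ψ_n = {0,…,s 0 − 1} × ⋯ × {0,…,s (n-1) − 1}`. -/
def lhPsi {n : ℕ} (s : Fin n → ℕ) : Set (Fin n → ℤ) :=
  {r | ∀ i, 0 ≤ r i ∧ r i < (s i : ℤ)}

/-- `inDilate s t lam` says that the lattice point `lam` satisfies
`0 ≤ lam 0 / s 0 ≤ lam 1 / s 1 ≤ ⋯ ≤ lam (n-1) / s (n-1) ≤ t`,
i.e. lies in the `t`-th dilate of the s-lecture hall polytope. -/
def inDilate {n : ℕ} (s : Fin n → ℕ) (t : ℕ) (lam : Fin n → ℤ) : Prop :=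
  (∀ i : Fin n, (i : ℕ) = 0 → 0 ≤ (lam i : ℚ) / (s i : ℚ)) ∧
  (∀ i : Fin n, ∀ h : (i : ℕ) + 1 < n,
    (lam i : ℚ) / (s i : ℚ) ≤ (lam ⟨(i : ℕ) + 1, h⟩ : ℚ) / (s ⟨(i : ℕ) + 1, h⟩ : ℚ)) ∧
  (∀ i : Fin n, (i : ℕ) = n - 1 → (lam i : ℚ) / (s i : ℚ) ≤ (t : ℚ))


namespace LH

variable {n m : ℕ}

/-- extended size sequence -/
def sz (s : Fin n → ℕ) (a : ℕ) : ℤ := if h : a < n then (s ⟨a, h⟩ : ℤ) else 1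

/-- extended residue sequence -/
def rz (r : Fin n → ℤ) (a : ℕ) : ℤ := if h : a < n then r ⟨a, h⟩ else 0

def desc (s : Fin n → ℕ) (r : Fin n → ℤ) (a : ℕ) : Prop :=
  sz s a * rz r (a + 1) < sz s (a + 1) * rz r a

instance (s : Fin n → ℕ) (r : Fin n → ℤ) : DecidablePred (desc s r) :=
  fun _ => Int.decLt _ _

/-- number of descents at positions `< j` -/
def dlt (s : Fin n → ℕ) (r : Fin n → ℤ) (j : ℕ) : ℕ :=
  ((Finset.range j).filter (desc s r)).card

def stat (s : Fin n → ℕ) (r : Fin n → ℤ) : ℕ := dlt s r n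

noncomputable def ΨF (s : Fin n → ℕ) : Finset (Fin n → ℤ) :=
  Fintype.piFinset fun i => Finset.Ico (0 : ℤ) (s i : ℤ)

lemma sz_pos (s : Fin n → ℕ) (hs : ∀ i, 0 < s i) (a : ℕ) : 0 < sz s a := by
  unfold sz; split
  · exact_mod_cast hs _
  · exact one_pos

lemma rz_mem (s : Fin n → ℕ) {r : Fin n → ℤ} (hr : r ∈ ΨF s) (a : ℕ) :
    0 ≤ rz r a ∧ rz r a < sz s a := by
  unfold rz sz
  rw [ΨF, Fintype.mem_piFinset] at hr
  split
  · next h => simpa using hr ⟨a, h⟩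
  · exact ⟨le_refl 0, one_pos⟩

lemma dlt_zero (s : Fin n → ℕ) (r : Fin n → ℤ) : dlt s r 0 = 0 := rfl

lemma dlt_succ (s : Fin n → ℕ) (r : Fin n → ℤ) (j : ℕ) :
    dlt s r (j + 1) = dlt s r j + (if desc s r j then 1 else 0) := by
  unfold dlt
  rw [Finset.range_add_one, Finset.filter_insert]
  split
  · rw [Finset.card_insert_of_notMem (by simp)]
  · simp

lemma dlt_le (s : Fin n → ℕ) (r : Fin n → ℤ) (j : ℕ) : dlt s r j ≤ j :=
  le_trans (Finset.card_filter_le _ _) (by simp)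

lemma stat_le (s : Fin n → ℕ) (r : Fin n → ℤ) : stat s r ≤ n := dlt_le s r n


lemma sum_coord (s : Fin m → ℕ) (c : Fin m → ℝ) (i : Fin m) :
    (∑ j, c j • lhVec s j) i = (s i : ℝ) * ∑ j ∈ Finset.univ.filter (· ≤ i), c j := by
  rw [Finset.sum_apply]
  rw [Finset.mul_sum]
  rw [Finset.sum_filter]
  apply Finset.sum_congr rfl
  intro j _
  simp only [Pi.smul_apply, lhVec, smul_eq_mul]
  split <;> ring

lemma Qzero (c : Fin m → ℝ) (i : Fin m) (h0 : (i : ℕ) = 0) :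
    ∑ j ∈ Finset.univ.filter (· ≤ i), c j = c i := by
  have : Finset.univ.filter (· ≤ i) = {i} := by
    ext a
    simp only [Finset.mem_filter, Finset.mem_univ, true_and, Finset.mem_singleton]
    constructor
    · intro ha; apply Fin.ext; have := (Fin.le_def.mp ha); omega
    · intro ha; exact le_of_eq ha
  rw [this, Finset.sum_singleton]

lemma Qsucc (c : Fin m → ℝ) (j : ℕ) (h : j + 1 < m) :
    ∑ a ∈ Finset.univ.filter (· ≤ (⟨j + 1, h⟩ : Fin m)), c a =
      (∑ a ∈ Finset.univ.filter (· ≤ (⟨j, Nat.lt_of_succ_lt h⟩ : Fin m)), c a)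
        + c ⟨j + 1, h⟩ := by
  have hins : Finset.univ.filter (· ≤ (⟨j + 1, h⟩ : Fin m)) =
      insert (⟨j + 1, h⟩ : Fin m)
        (Finset.univ.filter (· ≤ (⟨j, Nat.lt_of_succ_lt h⟩ : Fin m))) := by
    ext a
    simp only [Finset.mem_filter, Finset.mem_univ, true_and, Finset.mem_insert,
      Fin.le_def, Fin.ext_iff]
    omega
  rw [hins, Finset.sum_insert (by simp [Fin.le_def])]
  ring

/-- characterization of real points of `lhPar` -/
lemma mem_lhPar_iff (s : Fin m → ℕ) (hs : ∀ i, 0 < s i) (y : Fin m → ℝ) :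
    y ∈ lhPar s ↔
      (∀ i : Fin m, (i : ℕ) = 0 → 0 ≤ y i ∧ y i < s i) ∧
      (∀ (j : ℕ) (h : j + 1 < m),
        0 ≤ (s ⟨j, Nat.lt_of_succ_lt h⟩ : ℝ) * y ⟨j + 1, h⟩
            - (s ⟨j + 1, h⟩ : ℝ) * y ⟨j, Nat.lt_of_succ_lt h⟩ ∧
        (s ⟨j, Nat.lt_of_succ_lt h⟩ : ℝ) * y ⟨j + 1, h⟩
            - (s ⟨j + 1, h⟩ : ℝ) * y ⟨j, Nat.lt_of_succ_lt h⟩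
          < (s ⟨j, Nat.lt_of_succ_lt h⟩ : ℝ) * (s ⟨j + 1, h⟩ : ℝ)) := by
  have hspos : ∀ i : Fin m, (0 : ℝ) < s i := fun i => by exact_mod_cast hs i
  constructor
  · rintro ⟨c, hc, rfl⟩
    set Q : Fin m → ℝ := fun i => ∑ j ∈ Finset.univ.filter (· ≤ i), c j with hQ
    have hcoord : ∀ i, (∑ j, c j • lhVec s j) i = (s i : ℝ) * Q i :=
      fun i => sum_coord s c i
    constructor
    · intro i h0
      rw [hcoord i]
      have : Q i = c i := Qzero c i h0
      rw [this]
      exact ⟨mul_nonneg (hspos i).le (hc i).1,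
        by nlinarith [(hc i).2, hspos i]⟩
    · intro j h
      set i1 : Fin m := ⟨j + 1, h⟩
      set i0 : Fin m := ⟨j, Nat.lt_of_succ_lt h⟩
      rw [hcoord i1, hcoord i0]
      have hQs : Q i1 = Q i0 + c i1 := Qsucc c j h
      have e : (s i0 : ℝ) * ((s i1 : ℝ) * Q i1) - (s i1 : ℝ) * ((s i0 : ℝ) * Q i0)
          = (s i0 : ℝ) * (s i1 : ℝ) * c i1 := by rw [hQs]; ring
      rw [e]
      have h01 : (0:ℝ) < (s i0 : ℝ) * (s i1 : ℝ) := mul_pos (hspos i0) (hspos i1)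
      exact ⟨mul_nonneg h01.le (hc i1).1, by nlinarith [(hc i1).2]⟩
  · rintro ⟨h0, hstep⟩
    set q : Fin m → ℝ := fun i => y i / s i with hq
    set Qn : ℕ → ℝ := fun a => if h : a < m then q ⟨a, h⟩ else 0 with hQn
    have hQn_at : ∀ (a : ℕ) (h : a < m), Qn a = q ⟨a, h⟩ := fun a h => dif_pos h
    set c : Fin m → ℝ := fun i => if (i : ℕ) = 0 then Qn i else Qn i - Qn ((i : ℕ) - 1)
      with hc
    have hc_at : ∀ (j : ℕ) (h : j + 1 < m),
        c ⟨j + 1, h⟩ = q ⟨j + 1, h⟩ - q ⟨j, Nat.lt_of_succ_lt h⟩ := by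
      intro j h
      simp only [hc]
      rw [if_neg (by simp)]
      simp only [Nat.add_sub_cancel]
      rw [hQn_at (j+1) h, hQn_at j (Nat.lt_of_succ_lt h)]
    have hc0 : ∀ (i : Fin m), (i : ℕ) = 0 → c i = q i := by
      intro i h0i
      simp only [hc, if_pos h0i]
      rw [hQn_at (i : ℕ) i.2, Fin.eta]
    refine ⟨c, ?_, ?_⟩
    · intro i
      by_cases hi : (i : ℕ) = 0
      · rw [hc0 i hi]
        have hb := h0 i hi
        constructor
        · exact div_nonneg hb.1 (hspos i).le
        · rw [div_lt_one (hspos i)]; exact hb.2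
      · obtain ⟨j, hj⟩ : ∃ j, (i : ℕ) = j + 1 := ⟨(i : ℕ) - 1, by omega⟩
        have hjm : j + 1 < m := hj ▸ i.2
        have hi1 : i = ⟨j + 1, hjm⟩ := Fin.ext hj
        rw [hi1, hc_at j hjm]
        obtain ⟨hA, hB⟩ := hstep j hjm
        set i1 : Fin m := ⟨j + 1, hjm⟩
        set i0 : Fin m := ⟨j, Nat.lt_of_succ_lt hjm⟩
        have hdif : q i1 - q i0 =
            ((s i0 : ℝ) * y i1 - (s i1 : ℝ) * y i0) / ((s i0 : ℝ) * (s i1 : ℝ)) := by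
          have hne1 : ((s i1 : ℝ)) ≠ 0 := (hspos i1).ne'
          have hne0 : ((s i0 : ℝ)) ≠ 0 := (hspos i0).ne'
          simp only [hq]
          rw [div_sub_div _ _ hne1 hne0]
          ring
        rw [hdif]
        have h01 : (0:ℝ) < (s i0 : ℝ) * (s i1 : ℝ) := mul_pos (hspos i0) (hspos i1)
        exact ⟨div_nonneg hA h01.le, by rw [div_lt_one h01]; exact hB⟩
    · funext i
      rw [sum_coord]
      have key : ∀ (k : ℕ) (hk : k < m),
          ∑ a ∈ Finset.univ.filter (· ≤ (⟨k, hk⟩ : Fin m)), c a = q ⟨k, hk⟩ := by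
        intro k
        induction k with
        | zero => intro hk; rw [Qzero c ⟨0, hk⟩ rfl, hc0 ⟨0, hk⟩ rfl]
        | succ k ih =>
          intro hk
          rw [Qsucc c k hk, ih (Nat.lt_of_succ_lt hk), hc_at k hk]
          ring
      have hki := key (i : ℕ) i.2
      simp only [Fin.eta] at hki
      rw [hki]
      have : q i = y i / s i := rfl
      rw [this, mul_comm, div_mul_cancel₀ _ (hspos i).ne']

lemma mem_lhPar_int_iff (s : Fin m → ℕ) (hs : ∀ i, 0 < s i) (x : Fin m → ℤ) :
    ((fun k => (x k : ℝ)) ∈ lhPar s) ↔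
      (∀ i : Fin m, (i : ℕ) = 0 → 0 ≤ x i ∧ x i < (s i : ℤ)) ∧
      (∀ (j : ℕ) (h : j + 1 < m),
        0 ≤ (s ⟨j, Nat.lt_of_succ_lt h⟩ : ℤ) * x ⟨j + 1, h⟩
            - (s ⟨j + 1, h⟩ : ℤ) * x ⟨j, Nat.lt_of_succ_lt h⟩ ∧
        (s ⟨j, Nat.lt_of_succ_lt h⟩ : ℤ) * x ⟨j + 1, h⟩
            - (s ⟨j + 1, h⟩ : ℤ) * x ⟨j, Nat.lt_of_succ_lt h⟩
          < (s ⟨j, Nat.lt_of_succ_lt h⟩ : ℤ) * (s ⟨j + 1, h⟩ : ℤ)) := by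
  rw [mem_lhPar_iff s hs]
  constructor
  · rintro ⟨h0, h1⟩
    refine ⟨fun i hi => ?_, fun j h => ?_⟩
    · obtain ⟨a, b⟩ := h0 i hi; exact ⟨by exact_mod_cast a, by exact_mod_cast b⟩
    · obtain ⟨a, b⟩ := h1 j h; exact ⟨by exact_mod_cast a, by exact_mod_cast b⟩
  · rintro ⟨h0, h1⟩
    refine ⟨fun i hi => ?_, fun j h => ?_⟩
    · obtain ⟨a, b⟩ := h0 i hi; exact ⟨by exact_mod_cast a, by exact_mod_cast b⟩
    · obtain ⟨a, b⟩ := h1 j h; exact ⟨by exact_mod_cast a, by exact_mod_cast b⟩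


/-- chain condition: `0 ≤ k_0 ≤ k_1 ≤ ... ≤ k_{N-1} ≤ M` -/
def ch (N : ℕ) (M : ℤ) (k : Fin N → ℤ) : Prop :=
  (∀ i : Fin N, (i : ℕ) = 0 → 0 ≤ k i) ∧
  (∀ (j : ℕ) (h : j + 1 < N), k ⟨j, Nat.lt_of_succ_lt h⟩ ≤ k ⟨j + 1, h⟩) ∧
  (∀ i : Fin N, (i : ℕ) = N - 1 → k i ≤ M)

instance (N : ℕ) (M : ℤ) : DecidablePred (ch N M) := fun k =>
  decidable_of_iff ((∀ i : Fin N, (i : ℕ) = 0 → 0 ≤ k i) ∧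
    (∀ j : Fin N, ∀ h : (j : ℕ) + 1 < N,
      k ⟨(j : ℕ), Nat.lt_of_succ_lt h⟩ ≤ k ⟨(j : ℕ) + 1, h⟩) ∧
    (∀ i : Fin N, (i : ℕ) = N - 1 → k i ≤ M)) (by
      constructor
      · rintro ⟨a, b, c⟩
        exact ⟨a, fun j h => b ⟨j, Nat.lt_of_succ_lt h⟩ h, c⟩
      · rintro ⟨a, b, c⟩
        exact ⟨a, fun j h => b (j : ℕ) h, c⟩)

noncomputable def CF (N : ℕ) (M : ℤ) : Finset (Fin N → ℤ) :=
  (Fintype.piFinset fun _ : Fin N => Finset.Icc (0 : ℤ) M).filter (ch N M)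

lemma chain_mono {N : ℕ} (k : Fin N → ℤ)
    (hk : ∀ (j : ℕ) (h : j + 1 < N), k ⟨j, Nat.lt_of_succ_lt h⟩ ≤ k ⟨j + 1, h⟩) :
    ∀ (b : ℕ) (hb : b < N) (a : ℕ) (ha : a < N), a ≤ b → k ⟨a, ha⟩ ≤ k ⟨b, hb⟩ := by
  intro b
  induction b with
  | zero =>
    intro hb a ha hab
    have : a = 0 := Nat.le_zero.mp hab
    subst this
    exact le_refl _
  | succ b ih =>
    intro hb a ha hab
    rcases Nat.lt_or_ge a (b + 1) with h' | h'
    · exact le_trans (ih (Nat.lt_of_succ_lt hb) a ha (Nat.lt_succ_iff.mp h')) (hk b hb)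
    · have : a = b + 1 := le_antisymm hab h'
      subst this
      exact le_refl _

lemma ch_bounds {N : ℕ} {M : ℤ} {k : Fin N → ℤ} (hch : ch N M k) (i : Fin N) :
    0 ≤ k i ∧ k i ≤ M := by
  obtain ⟨h0, hstep, hlast⟩ := hch
  have hN : 0 < N := i.pos
  constructor
  · exact le_trans (h0 ⟨0, hN⟩ rfl)
      (chain_mono k hstep (i : ℕ) i.2 0 hN (Nat.zero_le _) |>.trans_eq (by rw [Fin.eta]))
  · have := chain_mono k hstep (N - 1) (by omega) (i : ℕ) i.2 (by omega)
    rw [Fin.eta] at this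
    exact le_trans this (hlast ⟨N - 1, by omega⟩ rfl)

lemma cf_card_neg (N : ℕ) (M : ℤ) (hM : M < 0) (hN : 0 < N) : (CF N M).card = 0 := by
  rw [Finset.card_eq_zero]
  rw [Finset.eq_empty_iff_forall_notMem]
  intro k hk
  rw [CF, Finset.mem_filter] at hk
  have := ch_bounds hk.2 ⟨0, hN⟩
  omega

lemma cf_card (N : ℕ) : ∀ (M : ℤ), 0 ≤ M → (CF N M).card = (M.toNat + N).choose N := by
  induction N with
  | zero =>
    intro M hM
    rw [Nat.choose_zero_right]
    have : CF 0 M = {fun i => i.elim0} := by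
      ext k
      rw [Finset.mem_singleton]
      constructor
      · intro _
        funext i
        exact i.elim0
      · intro hk
        rw [CF, Finset.mem_filter]
        refine ⟨by rw [Fintype.mem_piFinset]; intro i; exact i.elim0, ?_⟩
        exact ⟨fun i => i.elim0, fun j h => by omega, fun i => i.elim0⟩
    rw [this, Finset.card_singleton]
  | succ N ih =>
    intro M hM
    -- bijection with sigma
    classical
    set g : ((_ : ℤ) × (Fin N → ℤ)) → (Fin (N + 1) → ℤ) := fun p => Fin.snoc p.2 p.1 with hg
    have himg : ((Finset.Icc (0 : ℤ) M).sigma fun v => CF N v).image g = CF (N + 1) M := by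
      ext k'
      simp only [Finset.mem_image, Finset.mem_sigma, Finset.mem_Icc]
      constructor
      · rintro ⟨⟨v, k⟩, ⟨hv, hkCF⟩, rfl⟩
        dsimp only at hv hkCF ⊢
        rw [CF, Finset.mem_filter] at hkCF ⊢
        obtain ⟨hkpi, hkch⟩ := hkCF
        rw [Fintype.mem_piFinset] at hkpi
        have hbd : ∀ i, 0 ≤ k i ∧ k i ≤ v := fun i => ch_bounds hkch i
        have hval : ∀ (j : ℕ) (h : j < N + 1), g ⟨v, k⟩ ⟨j, h⟩
            = if h' : j < N then k ⟨j, h'⟩ else v := by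
          intro j h
          split
          · next h' =>
            have : (⟨j, h⟩ : Fin (N + 1)) = Fin.castSucc ⟨j, h'⟩ := rfl
            rw [hg]
            simp only [this, Fin.snoc_castSucc]
          · next h' =>
            have : (⟨j, h⟩ : Fin (N + 1)) = Fin.last N := by
              apply Fin.ext; simp; omega
            rw [hg]
            simp only [this, Fin.snoc_last]
        constructor
        · rw [Fintype.mem_piFinset]
          intro i
          rw [Finset.mem_Icc]
          have := hval (i : ℕ) i.2
          rw [Fin.eta] at this
          rw [this]
          split
          · next h' => have := hbd ⟨(i:ℕ), h'⟩; omega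
          · omega
        · refine ⟨?_, ?_, ?_⟩
          · intro i hi
            have := hval (i : ℕ) i.2
            rw [Fin.eta] at this
            rw [this, hi]
            split
            · next h' => exact (hbd _).1
            · next h' => omega
          · intro j h
            have e1 := hval j (Nat.lt_of_succ_lt h)
            have e2 := hval (j + 1) h
            rw [e1, e2]
            by_cases h1 : j + 1 < N
            · rw [dif_pos (Nat.lt_of_succ_lt h1), dif_pos h1]
              exact hkch.2.1 j h1
            · rw [dif_neg h1]
              split
              · next h' =>
                have hlast : k ⟨j, h'⟩ ≤ v := by
                  have := hkch.2.2 ⟨j, h'⟩ (by simp; omega)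
                  exact this
                exact hlast
              · omega
          · intro i hi
            have := hval (i : ℕ) i.2
            rw [Fin.eta] at this
            rw [this]
            have hiN : (i : ℕ) = N := by omega
            rw [dif_neg (by omega)]
            exact hv.2
      · intro hk'
        rw [CF, Finset.mem_filter, Fintype.mem_piFinset] at hk'
        obtain ⟨hpi, hch'⟩ := hk'
        refine ⟨⟨k' (Fin.last N), Fin.init k'⟩, ⟨?_, ?_⟩, ?_⟩
        · have := hpi (Fin.last N)
          rw [Finset.mem_Icc] at this
          exact this
        · dsimp only
          rw [CF, Finset.mem_filter, Fintype.mem_piFinset]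
          have hmono := hch'.2.1
          have hinit : ∀ i : Fin N, Fin.init k' i = k' (Fin.castSucc i) := fun i => rfl
          have hle : ∀ i : Fin N, k' (Fin.castSucc i) ≤ k' (Fin.last N) := by
            intro i
            have := chain_mono k' hmono N (Nat.lt_succ_self N) (i : ℕ)
              (Nat.lt_succ_of_lt i.2) (le_of_lt i.2)
            have e1 : (⟨(i:ℕ), Nat.lt_succ_of_lt i.2⟩ : Fin (N+1)) = Fin.castSucc i := by
              apply Fin.ext; simp
            have e2 : (⟨N, Nat.lt_succ_self N⟩ : Fin (N+1)) = Fin.last N := rfl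
            rw [e1, e2] at this
            exact this
          have h00 : ∀ i : Fin (N+1), (i : ℕ) = 0 → 0 ≤ k' i := hch'.1
          constructor
          · intro i
            rw [Finset.mem_Icc, hinit]
            constructor
            · have : 0 ≤ k' ⟨0, Nat.succ_pos N⟩ := h00 _ rfl
              have hm := chain_mono k' hmono (i : ℕ) (Nat.lt_succ_of_lt i.2) 0
                (Nat.succ_pos N) (Nat.zero_le _)
              have e1 : (⟨(i:ℕ), Nat.lt_succ_of_lt i.2⟩ : Fin (N+1)) = Fin.castSucc i := by
                apply Fin.ext; simp
              rw [e1] at hm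
              omega
            · exact hle i
          · refine ⟨?_, ?_, ?_⟩
            · intro i hi
              rw [hinit]
              apply h00
              simp [hi]
            · intro j h
              have := hmono j (Nat.lt_succ_of_lt h)
              have e1 : ∀ (a : ℕ) (ha : a < N), Fin.init k' ⟨a, ha⟩
                  = k' ⟨a, Nat.lt_succ_of_lt ha⟩ := by
                intro a ha
                rw [hinit ⟨a, ha⟩]
                congr 1
              rw [e1 j (Nat.lt_of_succ_lt h), e1 (j+1) h]
              exact this
            · intro i hi
              rw [hinit]
              have hiN : (i : ℕ) = N - 1 := hi
              exact hle i
        · rw [hg]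
          exact Fin.snoc_init_self k'
    have hinj : Set.InjOn g ((Finset.Icc (0 : ℤ) M).sigma fun v => CF N v) := by
      intro p1 _ p2 _ hgp
      rw [hg] at hgp
      simp only at hgp
      obtain ⟨v1, k1⟩ := p1
      obtain ⟨v2, k2⟩ := p2
      have hv : v1 = v2 := by
        have := congrFun hgp (Fin.last N)
        simpa [Fin.snoc_last] using this
      have hk : k1 = k2 := by
        funext i
        have := congrFun hgp (Fin.castSucc i)
        simpa [Fin.snoc_castSucc] using this
      simp [hv, hk]
    rw [← himg, Finset.card_image_of_injOn hinj, Finset.card_sigma]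
    -- now the sum
    have hsum : ∑ v ∈ Finset.Icc (0 : ℤ) M, (CF N v).card
        = ∑ v ∈ Finset.Icc (0 : ℤ) M, (v.toNat + N).choose N := by
      apply Finset.sum_congr rfl
      intro v hv
      rw [Finset.mem_Icc] at hv
      exact ih v hv.1
    rw [hsum]
    have hre : ∑ v ∈ Finset.Icc (0 : ℤ) M, (v.toNat + N).choose N
        = ∑ w ∈ Finset.Icc N (M.toNat + N), w.choose N := by
      refine Finset.sum_nbij' (fun v => v.toNat + N) (fun w => ((w - N : ℕ) : ℤ))
        ?_ ?_ ?_ ?_ ?_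
      all_goals intro a ha
      all_goals simp only [Finset.mem_Icc] at ha ⊢
      all_goals omega
    have hfin : M.toNat + N + 1 = M.toNat + (N + 1) := by omega
    rw [hre, Nat.sum_Icc_choose, hfin]


/-- extended sizes of the snoc'ed sequence agree with `sz`. -/
lemma snoc_sz (s : Fin n → ℕ) (a : ℕ) (h : a < n + 1) :
    ((Fin.snoc s 1 : Fin (n + 1) → ℕ) ⟨a, h⟩ : ℤ) = sz s a := by
  unfold sz
  by_cases ha : a < n
  · rw [dif_pos ha]
    have : (⟨a, h⟩ : Fin (n+1)) = Fin.castSucc ⟨a, ha⟩ := rfl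
    rw [this, Fin.snoc_castSucc]
  · rw [dif_neg ha]
    have : (⟨a, h⟩ : Fin (n+1)) = Fin.last n := by
      apply Fin.ext; simp; omega
    rw [this, Fin.snoc_last]
    norm_num

lemma snoc_pos (s : Fin n → ℕ) (hs : ∀ i, 0 < s i) :
    ∀ i : Fin (n + 1), 0 < (Fin.snoc s 1 : Fin (n + 1) → ℕ) i := by
  intro i
  have : ((Fin.snoc s 1 : Fin (n + 1) → ℕ) ⟨(i : ℕ), i.2⟩ : ℤ) = sz s i := snoc_sz s i i.2
  rw [Fin.eta] at this
  have h2 := sz_pos s hs (i : ℕ)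
  omega

/-- the lattice point of `Par` associated to `r ∈ Ψ` -/
def phi (s : Fin n → ℕ) (r : Fin n → ℤ) : Fin (n + 1) → ℤ :=
  fun i => rz r (i : ℕ) + sz s (i : ℕ) * dlt s r (i : ℕ)

lemma ell_eq (s : Fin n → ℕ) (hs : ∀ i, 0 < s i) (i : ℕ) :
    lhEll (lhPar (Fin.snoc s 1)) i = ((ΨF s).filter (fun r => stat s r = i)).card := by
  classical
  have hpos := snoc_pos s hs
  -- the set defining lhEll
  have hset : {x : Fin (n+1) → ℤ | (fun k => (x k : ℝ)) ∈ lhPar (Fin.snoc s 1) ∧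
      ∀ j : Fin (n+1), (j : ℕ) = (n+1) - 1 → x j = (i : ℤ)} =
      ↑((((ΨF s).filter (fun r => stat s r = i)).image (phi s)) : Finset (Fin (n+1) → ℤ)) := by
    ext x
    simp only [Set.mem_setOf_eq, Finset.coe_image, Set.mem_image, Finset.mem_coe,
      Finset.mem_filter]
    constructor
    · rintro ⟨hmem, hlast⟩
      rw [mem_lhPar_int_iff _ hpos] at hmem
      obtain ⟨h0, h1⟩ := hmem
      -- extended coordinates
      set Xe : ℕ → ℤ := fun a => if h : a < n + 1 then x ⟨a, h⟩ else 0 with hXe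
      have hXe_at : ∀ (a : ℕ) (h : a < n + 1), Xe a = x ⟨a, h⟩ := fun a h => dif_pos h
      -- the residues
      set r : Fin n → ℤ := fun j => x ⟨(j : ℕ), Nat.lt_succ_of_lt j.2⟩ % (s j : ℤ) with hr
      have hrΨ : r ∈ ΨF s := by
        rw [ΨF, Fintype.mem_piFinset]
        intro j
        have hsj : (0:ℤ) < (s j : ℤ) := by exact_mod_cast hs j
        simp only [hr, Finset.mem_Ico]
        exact ⟨Int.emod_nonneg _ hsj.ne', Int.emod_lt_of_pos _ hsj⟩
      have hrz : ∀ a, a ≤ n → rz r a = Xe a % sz s a := by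
        intro a ha
        unfold rz sz
        by_cases h' : a < n
        · rw [dif_pos h', dif_pos h', hr]
          rw [hXe_at a (Nat.lt_succ_of_lt h')]
        · rw [dif_neg h', dif_neg h', Int.emod_one]
      -- rewrite the step conditions via sz and Xe
      have hstep : ∀ (j : ℕ), j + 1 < n + 1 →
          0 ≤ sz s j * Xe (j+1) - sz s (j+1) * Xe j ∧
          sz s j * Xe (j+1) - sz s (j+1) * Xe j < sz s j * sz s (j+1) := by
        intro j hj
        have := h1 j hj
        rw [snoc_sz s j (Nat.lt_of_succ_lt hj), snoc_sz s (j+1) hj] at this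
        rw [hXe_at j (Nat.lt_of_succ_lt hj), hXe_at (j+1) hj]
        exact this
      -- main induction
      have key : ∀ a, a ≤ n → Xe a = rz r a + sz s a * dlt s r a := by
        intro a
        induction a with
        | zero =>
          intro _
          have hc := h0 ⟨0, Nat.succ_pos n⟩ rfl
          rw [snoc_sz s 0 (Nat.succ_pos n)] at hc
          rw [← hXe_at 0 (Nat.succ_pos n)] at hc
          rw [dlt_zero, hrz 0 (Nat.zero_le n)]
          rw [Int.emod_eq_of_lt hc.1 hc.2]
          ring
        | succ j ih =>
          intro hj1
          have hj : j ≤ n := Nat.le_of_succ_le hj1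
          have ihx := ih hj
          have hSj := sz_pos s hs j
          have hSj1 := sz_pos s hs (j+1)
          obtain ⟨hA, hB⟩ := hstep j (Nat.succ_lt_succ hj1)
          -- decompose Xe (j+1)
          have hdiv : Xe (j+1) = sz s (j+1) * (Xe (j+1) / sz s (j+1)) + rz r (j+1) := by
            rw [hrz (j+1) hj1]
            exact (Int.mul_ediv_add_emod _ _).symm
          set M : ℤ := Xe (j+1) / sz s (j+1) with hM
          set D : ℤ := M - (dlt s r j : ℤ) with hD
          have hrb0 := rz_mem s hrΨ j
          have hrb1 := rz_mem s hrΨ (j+1)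
          have hEsub : sz s j * Xe (j+1) - sz s (j+1) * Xe j
              = (sz s j * rz r (j+1) - sz s (j+1) * rz r j)
                + sz s j * sz s (j+1) * D := by
            rw [hdiv, ihx, hD, hM]; push_cast; ring
          have hS : (0:ℤ) < sz s j * sz s (j+1) := mul_pos hSj hSj1
          have hE1 : sz s j * rz r (j+1) - sz s (j+1) * rz r j < sz s j * sz s (j+1) := by
            nlinarith [hrb0.1, hrb1.2, hSj, hSj1]
          have hE2 : -(sz s j * sz s (j+1)) < sz s j * rz r (j+1) - sz s (j+1) * rz r j := by
            nlinarith [hrb1.1, hrb0.2, hSj, hSj1]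
          have hDval : D = if desc s r j then 1 else 0 := by
            by_cases hd : desc s r j
            · rw [if_pos hd]
              unfold desc at hd
              have hlt : (0:ℤ) < D ∧ D < 2 := by
                constructor
                · by_contra hcon
                  push_neg at hcon
                  have : sz s j * sz s (j+1) * D ≤ 0 :=
                    mul_nonpos_of_nonneg_of_nonpos hS.le hcon
                  rw [hEsub] at hA; omega
                · by_contra hcon
                  push_neg at hcon
                  have : sz s j * sz s (j+1) * 2 ≤ sz s j * sz s (j+1) * D :=
                    mul_le_mul_of_nonneg_left hcon hS.le
                  rw [hEsub] at hB
                  omega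
              omega
            · rw [if_neg hd]
              unfold desc at hd
              push_neg at hd
              have hE0 : 0 ≤ sz s j * rz r (j+1) - sz s (j+1) * rz r j := by omega
              have : (0 ≤ D ∧ D ≤ 0) := by
                constructor
                · by_contra hcon
                  push_neg at hcon
                  have hcon' : D ≤ -1 := by omega
                  have : sz s j * sz s (j+1) * D ≤ sz s j * sz s (j+1) * (-1) :=
                    mul_le_mul_of_nonneg_left hcon' hS.le
                  rw [hEsub] at hA
                  omega
                · by_contra hcon
                  push_neg at hcon
                  have hcon' : (1:ℤ) ≤ D := by omega
                  have : sz s j * sz s (j+1) * 1 ≤ sz s j * sz s (j+1) * D :=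
                    mul_le_mul_of_nonneg_left hcon' hS.le
                  rw [hEsub] at hB
                  omega
              omega
          have : M = (dlt s r (j+1) : ℤ) := by
            rw [dlt_succ]
            push_cast
            rw [← hDval, hD]
            push_cast
            ring
          rw [hdiv, this]
          ring
      refine ⟨r, ⟨hrΨ, ?_⟩, ?_⟩
      · -- stat s r = i
        have hXn := key n (le_refl n)
        have hlast' := hlast ⟨n, Nat.lt_succ_self n⟩ (by simp)
        rw [← hXe_at n (Nat.lt_succ_self n)] at hlast'
        unfold rz sz at hXn
        rw [dif_neg (lt_irrefl n), dif_neg (lt_irrefl n)] at hXn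
        have : (stat s r : ℤ) = (i : ℤ) := by
          unfold stat; omega
        exact_mod_cast this
      · -- phi s r = x
        funext j
        have := key (j : ℕ) (Nat.lt_succ_iff.mp j.2)
        rw [hXe_at (j : ℕ) j.2, Fin.eta] at this
        unfold phi
        omega
    · rintro ⟨r, ⟨hrΨ, hstat⟩, rfl⟩
      have hSpos := sz_pos s hs
      have hrzb := rz_mem s hrΨ
      constructor
      · rw [mem_lhPar_int_iff _ hpos]
        constructor
        · intro j hj
          have hj0 : j = ⟨0, Nat.succ_pos n⟩ := Fin.ext hj
          subst hj0
          rw [snoc_sz s 0 (Nat.succ_pos n)]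
          unfold phi
          simp only [dlt_zero]
          have := hrzb 0
          constructor <;> [skip; skip] <;> simp only [Nat.cast_zero, mul_zero, add_zero] <;> omega
        · intro j hj
          unfold phi
          rw [snoc_sz s j (Nat.lt_of_succ_lt hj), snoc_sz s (j+1) hj]
          simp only []
          have hd := dlt_succ s r j
          have hb0 := hrzb j
          have hb1 := hrzb (j+1)
          have hSj := hSpos j
          have hSj1 := hSpos (j+1)
          by_cases hdc : desc s r j
          · unfold desc at hdc
            rw [hd, if_pos (by exact hdc)]
            push_cast
            constructor <;> nlinarith
          · have hdc' : sz s (j+1) * rz r j ≤ sz s j * rz r (j+1) := by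
              unfold desc at hdc; omega
            rw [hd, if_neg hdc]
            push_cast
            constructor <;> nlinarith
      · intro j hj
        have hjn : j = ⟨n, Nat.lt_succ_self n⟩ := Fin.ext (by simpa using hj)
        subst hjn
        unfold phi
        simp only []
        unfold rz sz
        rw [dif_neg (lt_irrefl n), dif_neg (lt_irrefl n)]
        have : dlt s r n = i := hstat
        unfold stat at hstat
        omega
  -- conclude
  unfold lhEll
  rw [hset, Set.ncard_coe_finset]
  apply Finset.card_image_of_injOn
  intro r hr r' hr' hphi
  rw [Finset.mem_coe, Finset.mem_filter] at hr hr'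
  funext j
  have h1 : phi s r ⟨(j:ℕ), Nat.lt_succ_of_lt j.2⟩ = phi s r' ⟨(j:ℕ), Nat.lt_succ_of_lt j.2⟩ := by
    rw [hphi]
  unfold phi rz at h1
  simp only [dif_pos j.2] at h1
  rw [Fin.eta] at h1
  have hsj : (0:ℤ) < (s j : ℤ) := by exact_mod_cast hs j
  have hszj : sz s (j:ℕ) = (s j : ℤ) := by unfold sz; rw [dif_pos j.2, Fin.eta]
  rw [hszj] at h1
  have hb := rz_mem s hr.1 (j : ℕ)
  have hb' := rz_mem s hr'.1 (j : ℕ)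
  unfold rz at hb hb'
  simp only [dif_pos j.2, Fin.eta] at hb hb'
  rw [hszj] at hb hb'
  -- r j ≡ r' j mod s j and both in [0, s j)
  have : r j % (s j : ℤ) = r' j % (s j : ℤ) := by
    have e1 : r j + (s j : ℤ) * (dlt s r (j:ℕ)) ≡ r j [ZMOD (s j : ℤ)] := by
      unfold Int.ModEq
      simp [Int.add_mul_emod_self_left]
    have e2 : r' j + (s j : ℤ) * (dlt s r' (j:ℕ)) ≡ r' j [ZMOD (s j : ℤ)] := by
      unfold Int.ModEq
      simp [Int.add_mul_emod_self_left]
    have := e1.symm.trans (h1 ▸ e2)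
    exact this
  rw [Int.emod_eq_of_lt hb.1 hb.2, Int.emod_eq_of_lt hb'.1 hb'.2] at this
  exact this


lemma sz_at (s : Fin n → ℕ) (a : ℕ) (h : a < n) : sz s a = (s ⟨a, h⟩ : ℤ) := dif_pos h
lemma rz_at (r : Fin n → ℤ) (a : ℕ) (h : a < n) : rz r a = r ⟨a, h⟩ := dif_pos h
lemma sz_fin (s : Fin n → ℕ) (j : Fin n) : sz s (j : ℕ) = (s j : ℤ) := by
  rw [sz_at s _ j.2, Fin.eta]
lemma rz_fin (r : Fin n → ℤ) (j : Fin n) : rz r (j : ℕ) = r j := by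
  rw [rz_at r _ j.2, Fin.eta]

lemma mem_ΨF {s : Fin n → ℕ} {r : Fin n → ℤ} :
    r ∈ ΨF s ↔ ∀ j, 0 ≤ r j ∧ r j < (s j : ℤ) := by
  rw [ΨF, Fintype.mem_piFinset]
  simp only [Finset.mem_Ico]

/-- integer form of the dilate condition -/
lemma inDilate_iff (s : Fin n → ℕ) (hs : ∀ i, 0 < s i) (t : ℕ) (lam : Fin n → ℤ) :
    inDilate s t lam ↔
      (∀ i : Fin n, (i : ℕ) = 0 → 0 ≤ lam i) ∧
      (∀ i : Fin n, ∀ h : (i : ℕ) + 1 < n,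
        (s ⟨(i : ℕ) + 1, h⟩ : ℤ) * lam i ≤ (s i : ℤ) * lam ⟨(i : ℕ) + 1, h⟩) ∧
      (∀ i : Fin n, (i : ℕ) = n - 1 → lam i ≤ (t : ℤ) * (s i : ℤ)) := by
  have hq : ∀ i : Fin n, (0 : ℚ) < (s i : ℚ) := fun i => by exact_mod_cast hs i
  unfold inDilate
  constructor
  · rintro ⟨h0, h1, h2⟩
    refine ⟨fun i hi => ?_, fun i h => ?_, fun i hi => ?_⟩
    · have := h0 i hi
      rw [le_div_iff₀ (hq i), zero_mul] at this
      exact_mod_cast this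
    · have := h1 i h
      rw [div_le_div_iff₀ (hq i) (hq _)] at this
      have : ((s ⟨(i : ℕ) + 1, h⟩ : ℤ) : ℚ) * (lam i : ℚ)
          ≤ ((s i : ℤ) : ℚ) * (lam ⟨(i : ℕ) + 1, h⟩ : ℚ) := by push_cast; linarith
      exact_mod_cast this
    · have := h2 i hi
      rw [div_le_iff₀ (hq i)] at this
      have : ((lam i : ℤ) : ℚ) ≤ ((t : ℤ) : ℚ) * ((s i : ℤ) : ℚ) := by push_cast; linarith
      exact_mod_cast this
  · rintro ⟨h0, h1, h2⟩
    refine ⟨fun i hi => ?_, fun i h => ?_, fun i hi => ?_⟩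
    · rw [le_div_iff₀ (hq i), zero_mul]
      exact_mod_cast h0 i hi
    · rw [div_le_div_iff₀ (hq i) (hq _)]
      have := h1 i h
      have : ((s ⟨(i : ℕ) + 1, h⟩ : ℤ) : ℚ) * (lam i : ℚ)
          ≤ ((s i : ℤ) : ℚ) * (lam ⟨(i : ℕ) + 1, h⟩ : ℚ) := by exact_mod_cast this
      push_cast at this ⊢
      linarith
    · rw [div_le_iff₀ (hq i)]
      have := h2 i hi
      have : ((lam i : ℤ) : ℚ) ≤ ((t : ℤ) : ℚ) * ((s i : ℤ) : ℚ) := by exact_mod_cast this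
      push_cast at this ⊢
      linarith

def theta (s : Fin n → ℕ) (p : (Fin n → ℤ) × (Fin n → ℤ)) : Fin n → ℤ :=
  fun j => p.1 j + (s j : ℤ) * (p.2 j + (dlt s p.1 (j : ℕ) : ℤ))

noncomputable def BF (s : Fin n → ℕ) (t : ℕ) : Finset ((Fin n → ℤ) × (Fin n → ℤ)) :=
  (ΨF s ×ˢ Fintype.piFinset fun _ : Fin n => Finset.Icc (0 : ℤ) (t : ℤ)).filter
    (fun p => ch n ((t : ℤ) - (stat s p.1 : ℤ)) p.2)

lemma desc_last (s : Fin n → ℕ) (r : Fin n → ℤ) (hn : 0 < n) :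
    desc s r (n - 1) ↔ 0 < rz r (n - 1) := by
  unfold desc
  have h1 : n - 1 + 1 = n := by omega
  rw [h1]
  unfold sz rz
  rw [dif_neg (lt_irrefl n), dif_neg (lt_irrefl n)]
  rw [mul_zero, one_mul]

/-- the image of `theta` on `BF` is the dilate set -/
lemma dilate_eq_image (s : Fin n → ℕ) (hs : ∀ i, 0 < s i) (t : ℕ) :
    {lam : Fin n → ℤ | inDilate s t lam} = ↑((BF s t).image (theta s)) := by
  ext lam
  simp only [Set.mem_setOf_eq, Finset.coe_image, Set.mem_image, Finset.mem_coe]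
  rw [inDilate_iff s hs t lam]
  constructor
  · rintro ⟨h0, h1, h2⟩
    set r : Fin n → ℤ := fun j => lam j % (s j : ℤ) with hr
    set m : Fin n → ℤ := fun j => lam j / (s j : ℤ) with hm
    set k : Fin n → ℤ := fun j => m j - (dlt s r (j : ℕ) : ℤ) with hk
    have hsj : ∀ j : Fin n, (0 : ℤ) < (s j : ℤ) := fun j => by exact_mod_cast hs j
    have hrΨ : r ∈ ΨF s := by
      rw [mem_ΨF]
      intro j
      exact ⟨Int.emod_nonneg _ (hsj j).ne', Int.emod_lt_of_pos _ (hsj j)⟩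
    have hrfb := rz_mem s hrΨ
    have hlam : ∀ j : Fin n, lam j = r j + (s j : ℤ) * m j := by
      intro j
      rw [hr, hm]
      simp only []
      rw [add_comm, Int.mul_ediv_add_emod]
    -- the chain condition
    have hch : ch n ((t : ℤ) - (stat s r : ℤ)) k := by
      refine ⟨?_, ?_, ?_⟩
      · intro i hi
        rw [hk]
        simp only []
        have hd0 : dlt s r (i : ℕ) = 0 := by rw [hi, dlt_zero]
        rw [hd0]
        have : 0 ≤ lam i := h0 i hi
        have : 0 ≤ m i := by
          rw [hm]; exact Int.ediv_nonneg this (hsj i).le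
        omega
      · intro j h
        set i0 : Fin n := ⟨j, Nat.lt_of_succ_lt h⟩
        set i1 : Fin n := ⟨j + 1, h⟩
        have hii : (i0 : ℕ) = j := rfl
        have hstep := h1 i0 (by rw [hii]; exact h)
        have hstep : (s i1 : ℤ) * lam i0 ≤ (s i0 : ℤ) * lam i1 := hstep
        rw [hlam i0, hlam i1] at hstep
        have hS : (0:ℤ) < (s i0 : ℤ) * (s i1 : ℤ) := mul_pos (hsj i0) (hsj i1)
        have hb0 := hrfb j
        have hb1 := hrfb (j + 1)
        rw [rz_at r j i0.2, sz_at s j i0.2] at hb0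
        rw [rz_at r (j+1) i1.2, sz_at s (j+1) i1.2] at hb1
        -- descent analysis
        have hdesc : desc s r j ↔ (s i0 : ℤ) * r i1 < (s i1 : ℤ) * r i0 := by
          unfold desc
          rw [rz_at r j i0.2, sz_at s j i0.2, rz_at r (j+1) i1.2, sz_at s (j+1) i1.2]
        have hdd := dlt_succ s r j
        have hgoal : m i0 + (if desc s r j then 1 else 0) ≤ m i1 := by
          by_cases hd : desc s r j
          · rw [if_pos hd]
            rw [hdesc] at hd
            by_contra hcon
            push_neg at hcon
            have hmle : m i1 ≤ m i0 := by omega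
            have : (s i0 : ℤ) * (s i1 : ℤ) * m i1 ≤ (s i0 : ℤ) * (s i1 : ℤ) * m i0 :=
              mul_le_mul_of_nonneg_left hmle hS.le
            nlinarith
          · rw [if_neg hd]
            rw [hdesc] at hd
            push_neg at hd
            by_contra hcon
            push_neg at hcon
            have hmle : m i1 ≤ m i0 - 1 := by omega
            have : (s i0 : ℤ) * (s i1 : ℤ) * m i1
                ≤ (s i0 : ℤ) * (s i1 : ℤ) * (m i0 - 1) :=
              mul_le_mul_of_nonneg_left hmle hS.le
            nlinarith
        show m i0 - (dlt s r ((i0 : ℕ)) : ℤ) ≤ m i1 - (dlt s r ((i1 : ℕ)) : ℤ)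
        have e0 : (i0 : ℕ) = j := rfl
        have e1 : (i1 : ℕ) = j + 1 := rfl
        rw [e0, e1, hdd]
        rcases em (desc s r j) with hdx | hdx
        · rw [if_pos hdx] at hgoal ⊢
          push_cast
          omega
        · rw [if_neg hdx] at hgoal ⊢
          push_cast
          omega
      · intro i hi
        have hn : 0 < n := i.pos
        rw [hk]
        simp only []
        have hstat : stat s r = dlt s r (n - 1) + (if desc s r (n-1) then 1 else 0) := by
          have h' := dlt_succ s r (n - 1)
          rw [show n - 1 + 1 = n from by omega] at h'
          unfold stat
          omega
        have hlst := h2 i hi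
        rw [hlam i] at hlst
        have hbi := hrfb (i : ℕ)
        rw [rz_at r _ i.2, sz_at s _ i.2, Fin.eta] at hbi
        have hdi : desc s r (n - 1) ↔ 0 < r i := by
          rw [desc_last s r hn]
          rw [← hi, rz_at r _ i.2, Fin.eta]
        have hmb : m i + (if desc s r (n-1) then 1 else 0) ≤ (t : ℤ) := by
          by_cases hd : desc s r (n-1)
          · rw [if_pos hd]
            rw [hdi] at hd
            have hlt : (s i : ℤ) * m i < (s i : ℤ) * (t : ℤ) := by nlinarith
            have := (mul_lt_mul_iff_right₀ (hsj i)).mp hlt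
            omega
          · rw [if_neg hd]
            rw [hdi] at hd
            push_neg at hd
            have hri : r i = 0 := le_antisymm hd hbi.1
            have hle : (s i : ℤ) * m i ≤ (s i : ℤ) * (t : ℤ) := by nlinarith
            have := (mul_le_mul_iff_right₀ (hsj i)).mp hle
            omega
        show m i - (dlt s r ((i : ℕ)) : ℤ) ≤ (t : ℤ) - (stat s r : ℤ)
        rw [hi, hstat]
        rcases em (desc s r (n-1)) with hdx | hdx
        · rw [if_pos hdx] at hmb ⊢
          push_cast
          omega
        · rw [if_neg hdx] at hmb ⊢
          push_cast
          omega
    refine ⟨(r, k), ?_, ?_⟩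
    · rw [BF, Finset.mem_filter, Finset.mem_product]
      dsimp only
      refine ⟨⟨hrΨ, ?_⟩, hch⟩
      rw [Fintype.mem_piFinset]
      intro j
      rw [Finset.mem_Icc]
      have := ch_bounds hch j
      have hsle : (0:ℤ) ≤ (stat s r : ℤ) := by positivity
      constructor
      · exact this.1
      · omega
    · funext j
      show r j + (s j : ℤ) * (k j + (dlt s r (j : ℕ) : ℤ)) = lam j
      rw [hk]
      simp only []
      rw [hlam j]
      ring
  · rintro ⟨⟨r, k⟩, hmem, rfl⟩
    rw [BF, Finset.mem_filter, Finset.mem_product] at hmem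
    obtain ⟨⟨hrΨ, hkpi⟩, hch⟩ := hmem
    dsimp only at hrΨ hkpi hch
    have hsj : ∀ j : Fin n, (0 : ℤ) < (s j : ℤ) := fun j => by exact_mod_cast hs j
    have hrb := mem_ΨF.mp hrΨ
    refine ⟨?_, ?_, ?_⟩
    · intro i hi
      show 0 ≤ r i + (s i : ℤ) * (k i + (dlt s r (i : ℕ) : ℤ))
      have hd0 : dlt s r (i : ℕ) = 0 := by rw [hi, dlt_zero]
      rw [hd0]
      have hk0 := hch.1 i hi
      have := (hrb i).1
      nlinarith [(hsj i)]
    · intro i h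
      set i1 : Fin n := ⟨(i : ℕ) + 1, h⟩ with hi1
      show (s i1 : ℤ) * (r i + (s i : ℤ) * (k i + (dlt s r (i : ℕ) : ℤ)))
          ≤ (s i : ℤ) * (r i1 + (s i1 : ℤ) * (k i1 + (dlt s r ((i1 : ℕ)) : ℤ)))
      have hii1 : ((i1 : Fin n) : ℕ) = (i : ℕ) + 1 := rfl
      rw [hii1]
      have hdd := dlt_succ s r (i : ℕ)
      have hki : k i ≤ k i1 := hch.2.1 (i : ℕ) h
      have hb0 := hrb i
      have hb1 := hrb i1
      have hdesc : desc s r (i : ℕ) ↔ (s i : ℤ) * r i1 < (s i1 : ℤ) * r i := by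
        unfold desc
        rw [rz_at r _ i.2, sz_at s _ i.2, rz_at r ((i : ℕ) + 1) h, sz_at s ((i : ℕ) + 1) h]
        try simp only [Fin.eta]
      rw [hdd]
      by_cases hd : desc s r (i : ℕ)
      · rw [if_pos hd]
        rw [hdesc] at hd
        push_cast
        nlinarith [hsj i, hsj i1, hb0.1, hb0.2, hb1.1, hb1.2, hki,
          mul_le_mul_of_nonneg_left hki (mul_pos (hsj i) (hsj i1)).le]
      · rw [if_neg hd]
        rw [hdesc] at hd
        push_neg at hd
        push_cast
        nlinarith [hsj i, hsj i1, hb0.1, hb0.2, hb1.1, hb1.2, hki,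
          mul_le_mul_of_nonneg_left hki (mul_pos (hsj i) (hsj i1)).le]
    · intro i hi
      have hn : 0 < n := i.pos
      show r i + (s i : ℤ) * (k i + (dlt s r (i : ℕ) : ℤ)) ≤ (t : ℤ) * (s i : ℤ)
      have hstat : stat s r = dlt s r (n - 1) + (if desc s r (n-1) then 1 else 0) := by
        have h' := dlt_succ s r (n - 1)
        rw [show n - 1 + 1 = n from by omega] at h'
        unfold stat
        omega
      have hkl := hch.2.2 i hi
      have hbi := hrb i
      have hdi : desc s r (n - 1) ↔ 0 < r i := by
        rw [desc_last s r hn]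
        rw [← hi, rz_at r _ i.2, Fin.eta]
      rw [hi]
      rw [hstat] at hkl
      by_cases hd : desc s r (n-1)
      · rw [if_pos hd] at hkl
        rw [hdi] at hd
        push_cast at hkl ⊢
        nlinarith [hsj i, hbi.2]
      · rw [if_neg hd] at hkl
        rw [hdi] at hd
        push_neg at hd
        have hri : r i = 0 := le_antisymm hd hbi.1
        push_cast at hkl ⊢
        nlinarith [hsj i]

lemma theta_injOn (s : Fin n → ℕ) (hs : ∀ i, 0 < s i) (t : ℕ) :
    Set.InjOn (theta s) (BF s t) := by
  intro p hp p' hp' hth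
  rw [Finset.mem_coe, BF, Finset.mem_filter, Finset.mem_product] at hp hp'
  obtain ⟨r, k⟩ := p
  obtain ⟨r', k'⟩ := p'
  have hrb := mem_ΨF.mp hp.1.1
  have hrb' := mem_ΨF.mp hp'.1.1
  have hsj : ∀ j : Fin n, (0 : ℤ) < (s j : ℤ) := fun j => by exact_mod_cast hs j
  have hreq : r = r' := by
    funext j
    have := congrFun hth j
    rw [theta, theta] at this
    simp only at this
    have e1 : (r j + (s j : ℤ) * (k j + (dlt s r (j:ℕ) : ℤ))) % (s j : ℤ) = r j := by
      rw [Int.add_mul_emod_self_left, Int.emod_eq_of_lt (hrb j).1 (hrb j).2]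
    have e2 : (r' j + (s j : ℤ) * (k' j + (dlt s r' (j:ℕ) : ℤ))) % (s j : ℤ) = r' j := by
      rw [Int.add_mul_emod_self_left, Int.emod_eq_of_lt (hrb' j).1 (hrb' j).2]
    rw [← e1, ← e2, this]
  subst hreq
  have hkeq : k = k' := by
    funext j
    have := congrFun hth j
    rw [theta, theta] at this
    simp only at this
    have := mul_left_cancel₀ (hsj j).ne' (by omega : (s j : ℤ) * (k j + (dlt s r (j:ℕ) : ℤ))
      = (s j : ℤ) * (k' j + (dlt s r (j:ℕ) : ℤ)))
    omega
  rw [hkeq]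


end LH

open LH

/-- Ehrhart: the number of lattice points in the `t`-th dilate of `P_s`
equals `∑_{i=0}^n ℓ^i(Par_{s*}) · C(t+n-i, n)`. -/
theorem stmt_1 (n : ℕ) (s : Fin n → ℕ) (hs : ∀ i, 0 < s i) (t : ℕ) :
    Set.ncard {lam : Fin n → ℤ | inDilate s t lam} =
      ∑ i ∈ Finset.range (n + 1),
        lhEll (lhPar (Fin.snoc s 1)) i * Nat.choose (t + n - i) n := by
  classical
  rw [dilate_eq_image s hs t, Set.ncard_coe_finset,
    Finset.card_image_of_injOn (theta_injOn s hs t)]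
  -- fiberwise over the first component
  have hmaps : ∀ p ∈ BF s t, p.1 ∈ ΨF s := by
    intro p hp
    rw [BF, Finset.mem_filter, Finset.mem_product] at hp
    exact hp.1.1
  rw [Finset.card_eq_sum_card_fiberwise hmaps]
  -- fibers are chain sets
  have hfiber : ∀ r ∈ ΨF s, ((BF s t).filter (fun p => p.1 = r)).card
      = (CF n ((t : ℤ) - (stat s r : ℤ))).card := by
    intro r hr
    have himg : (BF s t).filter (fun p => p.1 = r)
        = (CF n ((t : ℤ) - (stat s r : ℤ))).image (fun k => (r, k)) := by
      ext p
      obtain ⟨r', k⟩ := p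
      simp only [Finset.mem_filter, Finset.mem_image, BF, Finset.mem_product, CF,
        Fintype.mem_piFinset, Finset.mem_Icc, Prod.mk.injEq]
      constructor
      · rintro ⟨⟨⟨hr', hk⟩, hch⟩, rfl⟩
        refine ⟨k, ⟨?_, hch⟩, rfl, rfl⟩
        intro j
        exact ch_bounds hch j
      · rintro ⟨k₀, ⟨hk₀, hch⟩, rfl, rfl⟩
        have hstat0 : (0:ℤ) ≤ (stat s r : ℤ) := by positivity
        refine ⟨⟨⟨hr, ?_⟩, hch⟩, rfl⟩
        intro j
        have := ch_bounds hch j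
        constructor
        · exact this.1
        · omega
    rw [himg, Finset.card_image_of_injective _ (fun a b hab => by
      simpa using congrArg Prod.snd hab)]
  rw [Finset.sum_congr rfl hfiber]
  -- chain set cardinalities
  have hcf : ∀ r ∈ ΨF s, (CF n ((t : ℤ) - (stat s r : ℤ))).card
      = (t + n - stat s r).choose n := by
    intro r _
    by_cases hts : stat s r ≤ t
    · rw [cf_card n _ (by omega : (0:ℤ) ≤ (t : ℤ) - (stat s r : ℤ))]
      congr 1
      omega
    · push_neg at hts
      have hn : 0 < n := lt_of_lt_of_le (Nat.lt_of_lt_of_le (Nat.succ_pos t)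
        (by omega : t + 1 ≤ stat s r)) (stat_le s r)
      rw [cf_card_neg n _ (by omega : (t : ℤ) - (stat s r : ℤ) < 0) hn]
      have hlt : t + n - stat s r < n := by
        have := stat_le s r
        omega
      rw [Nat.choose_eq_zero_of_lt hlt]
  rw [Finset.sum_congr rfl hcf]
  -- regroup by stat value
  have hmaps2 : ∀ r ∈ ΨF s, stat s r ∈ Finset.range (n + 1) :=
    fun r _ => Finset.mem_range.mpr (Nat.lt_succ_of_le (stat_le s r))
  rw [← Finset.sum_fiberwise_of_maps_to hmaps2 (fun r => (t + n - stat s r).choose n)]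
  apply Finset.sum_congr rfl
  intro i _
  rw [ell_eq s hs i]
  have : ∑ r ∈ (ΨF s).filter (fun r => stat s r = i), (t + n - stat s r).choose n
      = ∑ _r ∈ (ΨF s).filter (fun r => stat s r = i), (t + n - i).choose n := by
    apply Finset.sum_congr rfl
    intro r hr
    rw [Finset.mem_filter] at hr
    rw [hr.2]
  rw [this, Finset.sum_const, smul_eq_mul]
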